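/- Let k be a complete discretely valued field of characteristic 0, L = k[x]/(g(x)) for an irreducible polynomial g ∈ k[x], θ the image of x, and ord_k the valuation on k (ord_k(π)=1 for a uniformizer π). Suppose x₀ ∈ O and e ≥ 0 satisfy: for every ε ∈ O, ord_k(g(x₀ + ε·π^e) − g(x₀)) > ord_k(g(x₀)) (uniformly, in the sense that the valuation of the polynomial g(x₀+π^e·T) − g(x₀) in O[T] exceeds ord_k(g(x₀))). Then for every x₁ ∈ x₀ + π^{e+ord_k(4)}·O, the product (x₀−θ)(x₁−θ) is a square in L*. -/

import Mathlib

open Polynomial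

namespace Stmt6Aux

/-- abbreviation for elements of `WithZero (Multiplicative ℤ)` -/
def zv (n : ℤ) : WithZero (Multiplicative ℤ) :=
  ((Multiplicative.ofAdd n : Multiplicative ℤ) : WithZero (Multiplicative ℤ))

lemma zv_ne_zero (n : ℤ) : zv n ≠ 0 := WithZero.coe_ne_zero

lemma zv_pos (n : ℤ) : 0 < zv n := zero_lt_iff.mpr (zv_ne_zero n)

lemma zv_mul (m n : ℤ) : zv m * zv n = zv (m + n) := by
  simp [zv, ← WithZero.coe_mul, ← ofAdd_add]

lemma zv_le {m n : ℤ} : zv m ≤ zv n ↔ m ≤ n := by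
  simp [zv, WithZero.coe_le_coe, Multiplicative.ofAdd_le]

lemma zv_lt {m n : ℤ} : zv m < zv n ↔ m < n := by
  simp [zv, WithZero.coe_lt_coe, Multiplicative.ofAdd_lt]

lemma zv_inv (m : ℤ) : (zv m)⁻¹ = zv (-m) := by
  simp [zv, ← WithZero.coe_inv, ← ofAdd_neg]

lemma zv_pow (m : ℤ) (n : ℕ) : zv m ^ n = zv (n * m) := by
  simp only [zv, ← WithZero.coe_pow]
  norm_cast

lemma zv_zero : zv 0 = 1 := rfl

lemma exists_zv {x : WithZero (Multiplicative ℤ)} (hx : x ≠ 0) : ∃ m : ℤ, x = zv m :=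
  ⟨Multiplicative.toAdd (WithZero.unzero hx), by simp [zv, WithZero.coe_unzero]⟩

lemma le_of_lt_zv {x : WithZero (Multiplicative ℤ)} {n : ℤ} (h : x < zv n) :
    x ≤ zv (n - 1) := by
  rcases eq_or_ne x 0 with h0 | h0
  · simp [h0]
  · obtain ⟨m, rfl⟩ := exists_zv h0
    exact zv_le.mpr (by have := zv_lt.mp h; omega)

lemma pow_lt_pow_z {x y : WithZero (Multiplicative ℤ)} (h : x < y) {n : ℕ} (hn : n ≠ 0) :
    x ^ n < y ^ n := by
  have hy : y ≠ 0 := fun h0 => by simp [h0] at h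
  obtain ⟨b, rfl⟩ := exists_zv hy
  rcases eq_or_ne x 0 with h0 | h0
  · rw [h0, zero_pow hn, zv_pow]
    exact zv_pos _
  · obtain ⟨a, rfl⟩ := exists_zv h0
    rw [zv_pow, zv_pow]
    have hab := zv_lt.mp h
    have hn' : 0 < (n:ℤ) := by exact_mod_cast Nat.pos_of_ne_zero hn
    exact zv_lt.mpr (by nlinarith)

lemma hy' {y : WithZero (Multiplicative ℤ)} (h : (0:WithZero (Multiplicative ℤ)) < y) : y ≠ 0 := h.ne'



open Filter in
theorem one_add_isSq (L : Type*) [Field L] [Valued L (WithZero (Multiplicative ℤ))]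
    [CompleteSpace L] {u : L} (h2 : (2:L) ≠ 0)
    (hu : Valued.v u < Valued.v (4:L)) : ∃ z : L, 1 + u = z ^ 2 := by
  have h4 : (4:L) ≠ 0 := by
    intro h
    apply h2
    have : (4:L) = 2 * 2 := by norm_num
    rw [this] at h
    exact (mul_self_eq_zero.mp h)
  have hv4 : Valued.v (4:L) ≠ 0 := (Valuation.ne_zero_iff _).mpr h4
  set a : L := u / 4 with ha_def
  have hva : Valued.v a < 1 := by
    rw [ha_def, Valuation.map_div]
    rw [div_lt_iff₀ (zero_lt_iff.mpr hv4), one_mul]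
    exact hu
  have hva' : Valued.v a ≤ zv (-1) := by
    have := le_of_lt_zv (n := 0) (by simpa [zv_zero] using hva)
    simpa using this
  -- the Newton iteration
  let t : ℕ → L := fun n => Nat.rec 0 (fun _ s => a - s ^ 2) n
  have ht0 : t 0 = 0 := rfl
  have hts : ∀ n, t (n+1) = a - t n ^ 2 := fun n => rfl
  have claim1 : ∀ n, Valued.v (t n) ≤ zv (-1) := by
    intro n
    induction n with
    | zero => simp [ht0]
    | succ n ih =>
      rw [hts]
      refine le_trans (Valuation.map_sub _ _ _) (max_le hva' ?_)
      rw [map_pow]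
      calc Valued.v (t n) ^ 2 ≤ zv (-1) ^ 2 := pow_le_pow_left' ih 2
        _ ≤ zv (-1) := by rw [zv_pow]; exact zv_le.mpr (by norm_num)
  have claim2 : ∀ n : ℕ, Valued.v (t (n+1) - t n) ≤ zv (-(n+1 : ℤ)) := by
    intro n
    induction n with
    | zero =>
      have h1 : t (0+1) - t 0 = a := by rw [hts 0, ht0]; ring_nf
      rw [h1]
      simpa using hva'
    | succ n ih =>
      have heq : t (n+2) - t (n+1) = (t (n+1) - t n) * -(t n + t (n+1)) := by
        rw [hts (n+1), hts n]; ring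
      rw [heq, Valuation.map_mul, Valuation.map_neg]
      have hsum : Valued.v (t n + t (n+1)) ≤ zv (-1) :=
        le_trans (Valuation.map_add _ _ _) (max_le (claim1 n) (claim1 (n+1)))
      calc Valued.v (t (n+1) - t n) * Valued.v (t n + t (n+1))
          ≤ zv (-(n+1:ℤ)) * zv (-1) := mul_le_mul' ih hsum
        _ = zv (-(n+2:ℤ)) := by rw [zv_mul]; ring_nf
  have claim3 : ∀ n k : ℕ, Valued.v (t (n+k) - t n) ≤ zv (-(n+1:ℤ)) := by
    intro n k
    induction k with
    | zero => simp
    | succ k ih =>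
      have heq : t (n+(k+1)) - t n = (t (n+k+1) - t (n+k)) + (t (n+k) - t n) := by
        have : n + (k+1) = n + k + 1 := by ring
        rw [this]; ring
      rw [heq]
      refine le_trans (Valuation.map_add _ _ _) (max_le ?_ ih)
      refine le_trans (claim2 (n+k)) (zv_le.mpr ?_)
      push_cast; omega
  have hcauchy : CauchySeq t := by
    rw [cauchySeq_iff]
    intro V hV
    obtain ⟨γ, -, hγ⟩ := (Valued.hasBasis_uniformity L (WithZero (Multiplicative ℤ))).mem_iff.mp hV
    obtain ⟨m, hm⟩ := exists_zv (x := MonoidWithZeroHom.ValueGroup₀.embedding γ.1) (by simp)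
    refine ⟨m.natAbs, fun k hk l hl => hγ ?_⟩
    show Valued.v.restrict (t l - t k) < γ.1
    rw [Valuation.restrict_lt_iff_lt_embedding]
    have key : ∀ i j : ℕ, m.natAbs ≤ i → i ≤ j → Valued.v (t j - t i) < MonoidWithZeroHom.ValueGroup₀.embedding γ.1 := by
      intro i j hi hij
      obtain ⟨k', rfl⟩ := Nat.exists_eq_add_of_le hij
      refine lt_of_le_of_lt (claim3 i k') ?_
      rw [hm]
      refine zv_lt.mpr ?_
      omega
    rcases le_total k l with h | h
    · exact key k l hk h
    · rw [Valuation.map_sub_swap]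
      exact key l k hl h
  obtain ⟨b, hb⟩ := cauchySeq_tendsto_of_complete hcauchy
  have hb1 : Tendsto (fun n => t (n+1)) atTop (nhds b) := hb.comp (tendsto_add_atTop_nat 1)
  have hb2 : Tendsto (fun n => a - t n ^ 2) atTop (nhds (a - b ^ 2)) :=
    tendsto_const_nhds.sub (hb.pow 2)
  have heqfun : (fun n => t (n+1)) = fun n => a - t n ^ 2 := funext fun n => hts n
  rw [heqfun] at hb1
  have hbeq : b = a - b ^ 2 := tendsto_nhds_unique hb1 hb2
  refine ⟨1 + 2 * b, ?_⟩
  have h4a : (4:L) * a = u := by rw [ha_def]; field_simp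
  linear_combination (-1 : L) * h4a - 4 * hbeq

end Stmt6Aux

open Stmt6Aux



/-- square-detection lemma. K complete discretely valued of char 0,
L = K(θ) with θ a root of the irreducible g ∈ K[x], the valuation of L extending
that of K (with ramification index e₀). If the polynomial g(x₀+π^e·T) − g(x₀) has
all coefficients of valuation strictly larger than ord(g(x₀)), then for every
x₁ ∈ x₀ + π^{e+ord(4)}·O, the product (x₀−θ)(x₁−θ) is a square in L*. -/
theorem stmt_6 (K L : Type*) [Field K]
    [Valued K (WithZero (Multiplicative ℤ))] [CompleteSpace K] [CharZero K]
    [Field L] [Algebra K L] [Valued L (WithZero (Multiplicative ℤ))] [CompleteSpace L]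
    -- the valuation on L extends the one on K, with ramification index e₀
    (e₀ : ℕ) (he₀ : 0 < e₀)
    (hcompat : ∀ a : K, Valued.v (algebraMap K L a) = (Valued.v a) ^ e₀)
    -- uniformizer of K
    (π : K) (hπ : Valued.v π
      = ((Multiplicative.ofAdd (-1 : ℤ) : Multiplicative ℤ) : WithZero (Multiplicative ℤ)))
    -- L = K[x]/(g) = K(θ)
    (g : K[X]) (hirr : Irreducible g)
    (θ : L) (hθ : aeval θ g = 0) (hgen : Algebra.adjoin K {θ} = ⊤)
    -- c = ord_K(4)
    (c : ℕ) (h4 : Valued.v (4 : K)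
      = ((Multiplicative.ofAdd (-(c : ℤ)) : Multiplicative ℤ) : WithZero (Multiplicative ℤ)))
    -- x₀ ∈ O and e ≥ 0 with ord(g(x₀ + π^e·T) − g(x₀)) > ord(g(x₀)) coefficientwise
    (x₀ : K) (hx₀ : Valued.v x₀ ≤ 1) (e : ℕ)
    (hkey : ∀ i, Valued.v ((g.comp (C x₀ + C (π ^ e) * X) - C (g.eval x₀)).coeff i)
      < Valued.v (g.eval x₀)) :
    ∀ x₁ : K, Valued.v (x₁ - x₀) ≤ Valued.v (π ^ (e + c)) →
      ∃ z : L, (algebraMap K L x₀ - θ) * (algebraMap K L x₁ - θ) = z ^ 2 := by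
  intro x₁ hx₁
  set f := algebraMap K L with hf_def
  have hfinj : Function.Injective f := (algebraMap K L).injective
  set P : K[X] := g.comp (C x₀ + C (π ^ e) * X) - C (g.eval x₀) with hP_def
  -- Step 1 : g.eval x₀ ≠ 0
  have hP0 : P.coeff 0 = 0 := by
    rw [hP_def, coeff_sub, coeff_zero_eq_eval_zero, coeff_zero_eq_eval_zero, eval_comp]
    simp
  have hvg_pos : (0 : WithZero (Multiplicative ℤ)) < Valued.v (g.eval x₀) := by
    have := hkey 0
    rwa [hP0, map_zero] at this
  have hg0 : g.eval x₀ ≠ 0 := by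
    intro h
    rw [h, map_zero] at hvg_pos
    exact lt_irrefl _ hvg_pos
  -- basic valuation computations
  have hπne : π ≠ 0 := by
    intro h
    rw [h, map_zero] at hπ
    exact zv_ne_zero _ hπ.symm
  have hzvπ : Valued.v π = zv (-1) := hπ
  have hπe : Valued.v (π ^ e) = zv (-(e:ℤ)) := by
    rw [map_pow, hzvπ, zv_pow]; ring_nf
  have hπec : Valued.v (π ^ (e+c)) = zv (-(e:ℤ)-c) := by
    rw [map_pow, hzvπ, zv_pow]; congr 1; push_cast; ring
  -- Step 2 : key claim about v (f x₀ - θ)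
  set A : L := f x₀ - θ with hA_def
  have hA : zv (-((e:ℤ)*e₀)) < Valued.v A := by
    by_contra hcon
    push_neg at hcon
    have hfπe : f (π ^ e) ≠ 0 := fun h => pow_ne_zero e hπne (hfinj (by simpa using h))
    have hvfπe : Valued.v (f (π ^ e)) = zv (-((e:ℤ)*e₀)) := by
      rw [hcompat, hπe, zv_pow]; congr 1; push_cast; ring
    set T : L := (θ - f x₀) / f (π ^ e) with hT_def
    have hvT : Valued.v T ≤ 1 := by
      rw [hT_def, Valuation.map_div, div_le_one₀ (zero_lt_iff.mpr ((Valuation.ne_zero_iff _).mpr hfπe))]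
      rw [hvfπe, Valuation.map_sub_swap]
      exact hcon
    have hθeq : f x₀ + f (π ^ e) * T = θ := by
      rw [hT_def, mul_div_cancel₀ _ hfπe]; ring
    have hPT : aeval T P = - f (g.eval x₀) := by
      rw [hP_def, map_sub, aeval_comp]
      have : aeval T (C x₀ + C (π ^ e) * X) = f x₀ + f (π ^ e) * T := by
        simp [aeval_C, aeval_X, hf_def]
      rw [this, hθeq, hθ, aeval_C]
      ring
    have hlt : Valued.v (aeval T P) < (Valued.v (g.eval x₀)) ^ e₀ := by
      rw [aeval_eq_sum_range]
      refine Valuation.map_sum_lt _ (pow_ne_zero e₀ hvg_pos.ne') ?_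
      intro i _
      rw [Algebra.smul_def, Valuation.map_mul, hcompat, map_pow]
      calc Valued.v (P.coeff i) ^ e₀ * Valued.v T ^ i
          ≤ Valued.v (P.coeff i) ^ e₀ * 1 := mul_le_mul' le_rfl (pow_le_one' hvT i)
        _ = Valued.v (P.coeff i) ^ e₀ := mul_one _
        _ < Valued.v (g.eval x₀) ^ e₀ := pow_lt_pow_z (hkey i) he₀.ne'
    rw [hPT, Valuation.map_neg, hcompat] at hlt
    exact lt_irrefl _ hlt
  have hvA_ne : Valued.v A ≠ 0 := ((zv_pos _).trans hA).ne'
  have hAne : A ≠ 0 := (Valuation.ne_zero_iff _).mp hvA_ne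
  obtain ⟨m, hm⟩ := exists_zv hvA_ne
  have hm_lt : -((e:ℤ)*e₀) < m := zv_lt.mp (hm ▸ hA)
  -- Step 3 : u is small
  set u : L := f (x₁ - x₀) / A with hu_def
  have hv4L : Valued.v (4 : L) = zv (-((c:ℤ)*e₀)) := by
    have h4f : (4 : L) = f (4 : K) := by rw [hf_def, map_ofNat]
    rw [h4f, hcompat, h4]
    show zv (-(c:ℤ)) ^ e₀ = _
    rw [zv_pow]; congr 1; push_cast; ring
  have hvδ : Valued.v (f (x₁ - x₀)) ≤ zv ((-(e:ℤ)-c)*e₀) := by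
    rw [hcompat]
    calc Valued.v (x₁ - x₀) ^ e₀ ≤ Valued.v (π ^ (e+c)) ^ e₀ := pow_le_pow_left' hx₁ e₀
      _ = zv ((-(e:ℤ)-c)*e₀) := by rw [hπec, zv_pow]; congr 1; push_cast; ring
  have hvu : Valued.v u < Valued.v (4 : L) := by
    rw [hu_def, Valuation.map_div, hm, hv4L, div_eq_mul_inv, zv_inv]
    calc Valued.v (f (x₁ - x₀)) * zv (-m)
        ≤ zv ((-(e:ℤ)-c)*e₀) * zv (-m) := mul_le_mul' hvδ le_rfl
      _ = zv ((-(e:ℤ)-c)*e₀ - m) := by rw [zv_mul]; ring_nf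
      _ < zv (-((c:ℤ)*e₀)) := zv_lt.mpr (by nlinarith)
  -- Step 4 : conclude
  have h2L : (2 : L) ≠ 0 := by
    have : CharZero L := charZero_of_injective_algebraMap hfinj
    exact two_ne_zero
  obtain ⟨z, hz⟩ := one_add_isSq L h2L hvu
  refine ⟨A * z, ?_⟩
  have hfδ : f (x₁ - x₀) = A * u := by
    rw [hu_def, mul_div_cancel₀ _ hAne]
  have hfx1 : f x₁ - θ = A + A * u := by
    rw [← hfδ, hA_def, map_sub]; ring
  rw [hfx1]
  show A * (A + A * u) = (A*z)^2
  linear_combination (A^2) * hz
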